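/- Let C be a coalgebra with filtration {C_n}, A a unital algebra, g : C → A convolution-invertible and f : C → A vanishing on C_n. Then g + f is convolution-invertible and (g+f)^{-1} agrees with g^{-1} − g^{-1} * f * g^{-1} on C_{n+1}. -/

import Mathlib

open TensorProduct

/-- The convolution product on `Hom_k(C, A)`. -/
noncomputable def conv {k : Type*} [Field k] {C A : Type*}
    [AddCommGroup C] [Module k C] [Coalgebra k C]
    [Ring A] [Algebra k A]
    (f g : C →ₗ[k] A) : C →ₗ[k] A :=
  LinearMap.mul' k A ∘ₗ TensorProduct.map f g ∘ₗ Coalgebra.comul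

/-- The convolution unit `e : c ↦ ε(c)·1_A`. -/
noncomputable def convUnit (k : Type*) [Field k] (C A : Type*)
    [AddCommGroup C] [Module k C] [Coalgebra k C]
    [Ring A] [Algebra k A] : C →ₗ[k] A :=
  Algebra.linearMap k A ∘ₗ (Coalgebra.counit : C →ₗ[k] k)

section Aux

variable {k : Type*} [Field k] {C A : Type*}
    [AddCommGroup C] [Module k C] [Coalgebra k C]
    [Ring A] [Algebra k A]

set_option linter.unusedSectionVars false

lemma conv_add_left (u v w : C →ₗ[k] A) : conv (u + v) w = conv u w + conv v w := by
  unfold conv; rw [TensorProduct.map_add_left]; ext c; simp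

lemma conv_add_right (u v w : C →ₗ[k] A) : conv u (v + w) = conv u v + conv u w := by
  unfold conv; rw [TensorProduct.map_add_right]; ext c; simp

lemma conv_zero_left (v : C →ₗ[k] A) : conv 0 v = 0 := by
  unfold conv; rw [TensorProduct.map_zero_left]; ext c; simp

lemma conv_zero_right (v : C →ₗ[k] A) : conv v 0 = 0 := by
  unfold conv; rw [TensorProduct.map_zero_right]; ext c; simp

lemma conv_sub_right (u v w : C →ₗ[k] A) : conv u (v - w) = conv u v - conv u w := by
  have := conv_add_right u w (v - w); rw [add_sub_cancel] at this; rw [this]; abel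

lemma conv_smul_right (r : k) (u v : C →ₗ[k] A) : conv u (r • v) = r • conv u v := by
  unfold conv; rw [TensorProduct.map_smul_right]; ext c; simp

lemma conv_smul_left (r : k) (u v : C →ₗ[k] A) : conv (r • u) v = r • conv u v := by
  unfold conv; rw [TensorProduct.map_smul_left]; ext c; simp

lemma conv_sum_right {ι : Type*} (s : Finset ι) (u : C →ₗ[k] A) (v : ι → C →ₗ[k] A) :
    conv u (∑ i ∈ s, v i) = ∑ i ∈ s, conv u (v i) := by
  classical
  induction s using Finset.induction_on with
  | empty => simpa using conv_zero_right u
  | insert a s hx ih =>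
    rw [Finset.sum_insert hx, Finset.sum_insert hx, conv_add_right, ih]

lemma conv_sum_left {ι : Type*} (s : Finset ι) (u : C →ₗ[k] A) (v : ι → C →ₗ[k] A) :
    conv (∑ i ∈ s, v i) u = ∑ i ∈ s, conv (v i) u := by
  classical
  induction s using Finset.induction_on with
  | empty => simpa using conv_zero_left u
  | insert a s hx ih =>
    rw [Finset.sum_insert hx, Finset.sum_insert hx, conv_add_left, ih]

lemma conv_unit_left (u : C →ₗ[k] A) : conv (convUnit k C A) u = u := by
  unfold conv convUnit
  have : TensorProduct.map (Algebra.linearMap k A ∘ₗ (Coalgebra.counit : C →ₗ[k] k)) u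
      = (TensorProduct.map (Algebra.linearMap k A) u) ∘ₗ
        ((Coalgebra.counit : C →ₗ[k] k).rTensor C) := by
    rw [LinearMap.rTensor, ← TensorProduct.map_comp]; simp
  rw [this]
  ext c
  simp only [LinearMap.comp_apply]
  rw [Coalgebra.rTensor_counit_comul]
  simp [Algebra.algebraMap_eq_smul_one]

lemma conv_unit_right (u : C →ₗ[k] A) : conv u (convUnit k C A) = u := by
  unfold conv convUnit
  have : TensorProduct.map u (Algebra.linearMap k A ∘ₗ (Coalgebra.counit : C →ₗ[k] k))
      = (TensorProduct.map u (Algebra.linearMap k A)) ∘ₗ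
        ((Coalgebra.counit : C →ₗ[k] k).lTensor C) := by
    rw [LinearMap.lTensor, ← TensorProduct.map_comp]; simp
  rw [this]
  ext c
  simp only [LinearMap.comp_apply]
  rw [Coalgebra.lTensor_counit_comul]
  simp [Algebra.algebraMap_eq_smul_one]

lemma conv_assoc (u v w : C →ₗ[k] A) : conv (conv u v) w = conv u (conv v w) := by
  have key : (LinearMap.mul' k A) ∘ₗ ((LinearMap.mul' k A).rTensor A) ∘ₗ
        (TensorProduct.map (TensorProduct.map u v) w) ∘ₗ
        ((TensorProduct.assoc k C C C).symm :
          C ⊗[k] (C ⊗[k] C) ≃ₗ[k] (C ⊗[k] C) ⊗[k] C).toLinearMap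
      = (LinearMap.mul' k A) ∘ₗ ((LinearMap.mul' k A).lTensor A) ∘ₗ
        (TensorProduct.map u (TensorProduct.map v w)) := by
    apply TensorProduct.ext'
    intro x yz
    induction yz using TensorProduct.induction_on with
    | zero => simp
    | tmul y z => simp [mul_assoc]
    | add a b ha hb => simp only [TensorProduct.tmul_add, map_add, ha, hb]
  ext c
  have hL : conv (conv u v) w c = (LinearMap.mul' k A)
      (((LinearMap.mul' k A).rTensor A)
        ((TensorProduct.map (TensorProduct.map u v) w)
          (((Coalgebra.comul (R := k) (A := C)).rTensor C) (Coalgebra.comul c)))) := by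
    have h1 : TensorProduct.map (conv u v) w
        = ((LinearMap.mul' k A).rTensor A) ∘ₗ (TensorProduct.map (TensorProduct.map u v) w)
          ∘ₗ ((Coalgebra.comul (R := k) (A := C)).rTensor C) := by
      unfold conv
      rw [LinearMap.rTensor, LinearMap.rTensor, ← TensorProduct.map_comp,
        ← TensorProduct.map_comp]
      simp
    show (LinearMap.mul' k A) (TensorProduct.map (conv u v) w (Coalgebra.comul c)) = _
    rw [h1]; rfl
  have hR : conv u (conv v w) c = (LinearMap.mul' k A)
      (((LinearMap.mul' k A).lTensor A)
        ((TensorProduct.map u (TensorProduct.map v w))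
          (((Coalgebra.comul (R := k) (A := C)).lTensor C) (Coalgebra.comul c)))) := by
    have h1 : TensorProduct.map u (conv v w)
        = ((LinearMap.mul' k A).lTensor A) ∘ₗ (TensorProduct.map u (TensorProduct.map v w))
          ∘ₗ ((Coalgebra.comul (R := k) (A := C)).lTensor C) := by
      unfold conv
      rw [LinearMap.lTensor, LinearMap.lTensor, ← TensorProduct.map_comp,
        ← TensorProduct.map_comp]
      simp
    show (LinearMap.mul' k A) (TensorProduct.map u (conv v w) (Coalgebra.comul c)) = _
    rw [h1]; rfl
  rw [hL, hR, ← Coalgebra.coassoc_symm_apply (R := k) c]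
  exact LinearMap.congr_fun key _

lemma sum_submodule_le {M : Type*} [AddCommGroup M] [Module k M]
    {ι : Type*} (s : Finset ι) (p : ι → Submodule k M) (q : Submodule k M)
    (h : ∀ i ∈ s, p i ≤ q) : (∑ i ∈ s, p i) ≤ q := by
  classical
  induction s using Finset.induction_on with
  | empty => simp
  | insert a s hx ih =>
    rw [Finset.sum_insert hx]
    rw [Submodule.add_eq_sup]
    exact sup_le (h a (Finset.mem_insert_self a s))
      (ih fun i hi => h i (Finset.mem_insert_of_mem hi))

/-- congruence: if `u = u'` and `v = v'` on `F N` then `conv u v = conv u' v'` on `F N`. -/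
lemma conv_congr (F : ℕ → Submodule k C)
    (hsub : ∀ m : ℕ, ∀ c ∈ F m, Coalgebra.comul (R := k) c ∈
      LinearMap.range (TensorProduct.map (F m).subtype (F m).subtype))
    (N : ℕ) (u u' v v' : C →ₗ[k] A)
    (hu : ∀ c ∈ F N, u c = u' c) (hv : ∀ c ∈ F N, v c = v' c) :
    ∀ c ∈ F N, conv u v c = conv u' v' c := by
  intro c hc
  obtain ⟨y, hy⟩ := hsub N c hc
  have key : (TensorProduct.map u v) ∘ₗ (TensorProduct.map (F N).subtype (F N).subtype)
      = (TensorProduct.map u' v') ∘ₗ (TensorProduct.map (F N).subtype (F N).subtype) := by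
    rw [← TensorProduct.map_comp, ← TensorProduct.map_comp]
    congr 1
    · ext x; exact hu x x.2
    · ext x; exact hv x x.2
  show LinearMap.mul' k A (TensorProduct.map u v (Coalgebra.comul c)) = _
  rw [← hy]
  have := LinearMap.congr_fun key y
  simp only [LinearMap.comp_apply] at this
  show LinearMap.mul' k A (TensorProduct.map u v (TensorProduct.map _ _ y)) = _
  rw [this, hy]
  rfl

/-- if `u` vanishes on `F a` and `v` vanishes on `F b`, `conv u v` vanishes on `F (a+b+1)`. -/
lemma conv_vanish (F : ℕ → Submodule k C) (hmono : Monotone F)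
    (hfilt : ∀ m : ℕ, ∀ c ∈ F m, Coalgebra.comul (R := k) c ∈
      ∑ i ∈ Finset.range (m + 1),
        LinearMap.range (TensorProduct.map (F i).subtype (F (m - i)).subtype))
    (a b : ℕ) (u v : C →ₗ[k] A)
    (hu : ∀ c ∈ F a, u c = 0) (hv : ∀ c ∈ F b, v c = 0) :
    ∀ c ∈ F (a + b + 1), conv u v c = 0 := by
  intro c hc
  have hmem := hfilt (a + b + 1) c hc
  have hker : (∑ i ∈ Finset.range (a + b + 1 + 1),
      LinearMap.range (TensorProduct.map (F i).subtype (F (a + b + 1 - i)).subtype))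
      ≤ LinearMap.ker ((LinearMap.mul' k A) ∘ₗ TensorProduct.map u v) := by
    apply sum_submodule_le
    intro i _
    rintro x ⟨y, rfl⟩
    simp only [LinearMap.mem_ker, LinearMap.comp_apply]
    have : (TensorProduct.map u v) ((TensorProduct.map (F i).subtype (F (a+b+1-i)).subtype) y)
        = (TensorProduct.map (u ∘ₗ (F i).subtype) (v ∘ₗ (F (a+b+1-i)).subtype)) y := by
      have h2 := LinearMap.congr_fun
        (TensorProduct.map_comp u v ((F i).subtype) ((F (a+b+1-i)).subtype)) y
      simp only [LinearMap.comp_apply] at h2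
      exact h2.symm
    rw [this]
    by_cases hia : i ≤ a
    · have hz : u ∘ₗ (F i).subtype = 0 := by
        ext x; exact hu x (hmono hia x.2)
      rw [hz, TensorProduct.map_zero_left]; simp
    · have hib : a + b + 1 - i ≤ b := by omega
      have hz : v ∘ₗ (F (a+b+1-i)).subtype = 0 := by
        ext x; exact hv x (hmono hib x.2)
      rw [hz, TensorProduct.map_zero_right]; simp
  have := hker hmem
  exact (by simpa [LinearMap.mem_ker] using this :
    LinearMap.mul' k A (TensorProduct.map u v (Coalgebra.comul c)) = 0)

/-- iterated convolution powers. -/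
noncomputable def qpow (q : C →ₗ[k] A) : ℕ → C →ₗ[k] A
  | 0 => convUnit k C A
  | m + 1 => conv q (qpow q m)

lemma qpow_succ_right (q : C →ₗ[k] A) (m : ℕ) : qpow q (m + 1) = conv (qpow q m) q := by
  induction m with
  | zero => show conv q (convUnit k C A) = conv (convUnit k C A) q
            rw [conv_unit_left, conv_unit_right]
  | succ m ih =>
    show conv q (qpow q (m + 1)) = conv (qpow q (m+1)) q
    rw [ih, ← conv_assoc]
    rw [show conv q (qpow q m) = qpow q (m + 1) from rfl, ih]

/-- partial sums of the geometric series `∑ (-1)^m q^{*m}`. -/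
noncomputable def psum (q : C →ₗ[k] A) (N : ℕ) : C →ₗ[k] A :=
  ∑ m ∈ Finset.range (N + 1), ((-1 : k) ^ m) • qpow q m

/-- glueing a stabilizing family of maps along an exhaustive monotone filtration. -/
lemma glue (F : ℕ → Submodule k C) (hmono : Monotone F) (hexh : ⨆ n, F n = ⊤)
    (P : ℕ → C →ₗ[k] A)
    (hstab : ∀ N M : ℕ, N ≤ M → ∀ c ∈ F N, P M c = P N c) :
    ∃ T : C →ₗ[k] A, ∀ N : ℕ, ∀ c ∈ F N, T c = P N c := by
  have hex : ∀ c : C, ∃ N, c ∈ F N := by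
    intro c
    have : c ∈ ⨆ n, F n := hexh ▸ Submodule.mem_top
    exact (Submodule.mem_iSup_of_directed F hmono.directed_le).mp this
  choose idx hidx using hex
  have key : ∀ (c : C) (N : ℕ), c ∈ F N → P (idx c) c = P N c := by
    intro c N hc
    have h1 := hstab (idx c) (max (idx c) N) (le_max_left _ _) c (hidx c)
    have h2 := hstab N (max (idx c) N) (le_max_right _ _) c hc
    rw [← h1, h2]
  refine ⟨⟨⟨fun c => P (idx c) c, ?_⟩, ?_⟩, ?_⟩
  · intro x y
    have hx : x ∈ F (max (idx x) (idx y)) := hmono (le_max_left _ _) (hidx x)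
    have hy : y ∈ F (max (idx x) (idx y)) := hmono (le_max_right _ _) (hidx y)
    have hxy : x + y ∈ F (max (idx x) (idx y)) := Submodule.add_mem _ hx hy
    rw [key (x + y) _ hxy, key x _ hx, key y _ hy, map_add]
  · intro r x
    have hx : r • x ∈ F (idx x) := Submodule.smul_mem _ _ (hidx x)
    simp only
    rw [key (r • x) _ hx, map_smul]
    rfl
  · intro N c hc
    exact key c N hc

end Aux

/-- Let `{C_n}` be a coalgebra filtration on `C`, `A` a unital algebra,
`g : C → A` convolution-invertible (with inverse `gi`) and `f : C → A` vanishing on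
`C_n`. Then `g + f` is convolution-invertible and `(g + f)⁻¹` agrees with
`g⁻¹ − g⁻¹ * f * g⁻¹` on `C_{n+1}`. -/
theorem conv_inverse_of_invertible_plus_nilpotent {k : Type*} [Field k] {C A : Type*}
    [AddCommGroup C] [Module k C] [Coalgebra k C]
    [Ring A] [Algebra k A]
    (F : ℕ → Submodule k C)
    (hmono : Monotone F)
    (hexh : ⨆ n, F n = ⊤)
    (hfilt : ∀ m : ℕ, ∀ c ∈ F m, Coalgebra.comul (R := k) c ∈
      ∑ i ∈ Finset.range (m + 1),
        LinearMap.range (TensorProduct.map (F i).subtype (F (m - i)).subtype))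
    (hsub : ∀ m : ℕ, ∀ c ∈ F m, Coalgebra.comul (R := k) c ∈
      LinearMap.range (TensorProduct.map (F m).subtype (F m).subtype))
    (n : ℕ) (g gi f : C →ₗ[k] A)
    (hg : conv g gi = convUnit k C A ∧ conv gi g = convUnit k C A)
    (hf : ∀ c ∈ F n, f c = 0) :
    ∃ h : C →ₗ[k] A,
      conv (g + f) h = convUnit k C A ∧
      conv h (g + f) = convUnit k C A ∧
      ∀ c ∈ F (n + 1), h c = (gi - conv gi (conv f gi)) c := by

  classical
  obtain ⟨hg1, hg2⟩ := hg
  set e : C →ₗ[k] A := convUnit k C A with he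
  set q : C →ₗ[k] A := conv f gi with hqdef
  have hel : ∀ u : C →ₗ[k] A, conv e u = u := fun u => by
    rw [he]; exact conv_unit_left u
  have her : ∀ u : C →ₗ[k] A, conv u e = u := fun u => by
    rw [he]; exact conv_unit_right u
  have hq0 : qpow q 0 = e := by rw [he]; rfl
  have hq1 : qpow q 1 = q := by
    rw [show qpow q 1 = conv q (qpow q 0) from rfl, hq0, her]
  -- `q` vanishes on `F n`
  have hq : ∀ c ∈ F n, q c = 0 := by
    intro c hc
    have h0 := conv_congr F hsub n f 0 gi gi
      (fun c' hc' => by simp [hf c' hc']) (fun _ _ => rfl) c hc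
    rw [hqdef, h0, conv_zero_left]
    rfl
  -- vanishing of convolution powers of `q`
  have hqpow : ∀ m : ℕ, ∀ c ∈ F (n + m), qpow q (m + 1) c = 0 := by
    intro m
    induction m with
    | zero =>
      intro c hc
      show conv q (qpow q 0) c = 0
      rw [hq0, her]
      exact hq c (by simpa using hc)
    | succ m ih =>
      intro c hc
      show conv q (qpow q (m + 1)) c = 0
      exact conv_vanish F hmono hfilt n (n + m) q (qpow q (m + 1)) hq ih c
        (hmono (by omega) hc)
  -- stabilization of the partial sums
  have hstab : ∀ N M : ℕ, N ≤ M → ∀ c ∈ F N, psum q M c = psum q N c := by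
    intro N M hNM c hc
    have hsplit : psum q M
        = psum q N + ∑ m ∈ Finset.Ico (N + 1) (M + 1), ((-1 : k) ^ m) • qpow q m :=
      (Finset.sum_range_add_sum_Ico _ (by omega : N + 1 ≤ M + 1)).symm
    rw [hsplit, LinearMap.add_apply]
    have htail : (∑ m ∈ Finset.Ico (N + 1) (M + 1), ((-1 : k) ^ m) • qpow q m) c = 0 := by
      rw [LinearMap.sum_apply]
      apply Finset.sum_eq_zero
      intro m hm
      have hm1 : N + 1 ≤ m := (Finset.mem_Ico.mp hm).1
      obtain ⟨j, rfl⟩ : ∃ j, m = j + 1 := ⟨m - 1, by omega⟩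
      have h0 : qpow q (j + 1) c = 0 := hqpow j c (hmono (by omega) hc)
      simp [h0]
    rw [htail, add_zero]
  obtain ⟨T, hT⟩ := glue F hmono hexh (psum q) hstab
  -- telescoping identities
  have htelL : ∀ N : ℕ, conv (e + q) (psum q N)
      = e - ((-1 : k) ^ (N + 1)) • qpow q (N + 1) := by
    intro N
    rw [conv_add_left, hel (psum q N)]
    have hconv : conv q (psum q N)
        = ∑ m ∈ Finset.range (N + 1), conv q (((-1 : k) ^ m) • qpow q m) :=
      conv_sum_right (Finset.range (N + 1)) q (fun m => ((-1 : k) ^ m) • qpow q m)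
    rw [hconv]
    have hcong : (∑ m ∈ Finset.range (N + 1), conv q (((-1 : k) ^ m) • qpow q m))
        = ∑ m ∈ Finset.range (N + 1), -(((-1 : k) ^ (m + 1)) • qpow q (m + 1)) := by
      apply Finset.sum_congr rfl
      intro m _
      rw [conv_smul_right, show conv q (qpow q m) = qpow q (m + 1) from rfl, pow_succ]
      rw [mul_neg_one]; ext c; simp
    rw [hcong]
    have hps : psum q N + ∑ m ∈ Finset.range (N + 1), -(((-1 : k) ^ (m + 1)) • qpow q (m + 1))
        = ∑ m ∈ Finset.range (N + 1),
            (((-1 : k) ^ m) • qpow q m - ((-1 : k) ^ (m + 1)) • qpow q (m + 1)) := by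
      rw [psum, ← Finset.sum_add_distrib]
      apply Finset.sum_congr rfl
      intro m _
      rw [sub_eq_add_neg]
    rw [hps,
      show (∑ m ∈ Finset.range (N + 1),
          (((-1 : k) ^ m) • qpow q m - ((-1 : k) ^ (m + 1)) • qpow q (m + 1)))
        = (fun m => ((-1 : k) ^ m) • qpow q m) 0
          - (fun m => ((-1 : k) ^ m) • qpow q m) (N + 1) from
        Finset.sum_range_sub' (fun m => ((-1 : k) ^ m) • qpow q m) (N + 1)]
    simp [hq0]
  have htelR : ∀ N : ℕ, conv (psum q N) (e + q)
      = e - ((-1 : k) ^ (N + 1)) • qpow q (N + 1) := by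
    intro N
    rw [conv_add_right, her (psum q N)]
    have hconv : conv (psum q N) q
        = ∑ m ∈ Finset.range (N + 1), conv (((-1 : k) ^ m) • qpow q m) q :=
      conv_sum_left (Finset.range (N + 1)) q (fun m => ((-1 : k) ^ m) • qpow q m)
    rw [hconv]
    have hcong : (∑ m ∈ Finset.range (N + 1), conv (((-1 : k) ^ m) • qpow q m) q)
        = ∑ m ∈ Finset.range (N + 1), -(((-1 : k) ^ (m + 1)) • qpow q (m + 1)) := by
      apply Finset.sum_congr rfl
      intro m _
      rw [conv_smul_left, ← qpow_succ_right, pow_succ]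
      rw [mul_neg_one]; ext c; simp
    rw [hcong]
    have hps : psum q N + ∑ m ∈ Finset.range (N + 1), -(((-1 : k) ^ (m + 1)) • qpow q (m + 1))
        = ∑ m ∈ Finset.range (N + 1),
            (((-1 : k) ^ m) • qpow q m - ((-1 : k) ^ (m + 1)) • qpow q (m + 1)) := by
      rw [psum, ← Finset.sum_add_distrib]
      apply Finset.sum_congr rfl
      intro m _
      rw [sub_eq_add_neg]
    rw [hps,
      show (∑ m ∈ Finset.range (N + 1),
          (((-1 : k) ^ m) • qpow q m - ((-1 : k) ^ (m + 1)) • qpow q (m + 1)))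
        = (fun m => ((-1 : k) ^ m) • qpow q m) 0
          - (fun m => ((-1 : k) ^ m) • qpow q m) (N + 1) from
        Finset.sum_range_sub' (fun m => ((-1 : k) ^ m) • qpow q m) (N + 1)]
    simp [hq0]
  have hex : ∀ c : C, ∃ N, c ∈ F N := fun c =>
    (Submodule.mem_iSup_of_directed F hmono.directed_le).mp (hexh ▸ Submodule.mem_top)
  have hA : conv (e + q) T = e := by
    ext c
    obtain ⟨N, hN⟩ := hex c
    have h1 : conv (e + q) T c = conv (e + q) (psum q N) c :=
      conv_congr F hsub N (e + q) (e + q) T (psum q N)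
        (fun _ _ => rfl) (fun c' hc' => hT N c' hc') c hN
    rw [h1, htelL N]
    have h0 : qpow q (N + 1) c = 0 := hqpow N c (hmono (by omega) hN)
    simp [h0]
  have hB : conv T (e + q) = e := by
    ext c
    obtain ⟨N, hN⟩ := hex c
    have h1 : conv T (e + q) c = conv (psum q N) (e + q) c :=
      conv_congr F hsub N T (psum q N) (e + q) (e + q)
        (fun c' hc' => hT N c' hc') (fun _ _ => rfl) c hN
    rw [h1, htelR N]
    have h0 : qpow q (N + 1) c = 0 := hqpow N c (hmono (by omega) hN)
    simp [h0]
  have hgf : g + f = conv (e + q) g := by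
    rw [conv_add_left, hel g]
    have : conv q g = f := by
      rw [hqdef, conv_assoc, hg2]
      exact her f
    rw [this]
  refine ⟨conv gi T, ?_, ?_, ?_⟩
  · rw [hgf, conv_assoc, ← conv_assoc g gi T, hg1, hel T]
    exact hA
  · rw [hgf, ← conv_assoc, conv_assoc gi T (e + q), hB, her gi]
    exact hg2
  · intro c hc
    have h1 : conv gi T c = conv gi (psum q (n + 1)) c :=
      conv_congr F hsub (n + 1) gi gi T (psum q (n + 1))
        (fun _ _ => rfl) (fun c' hc' => hT (n + 1) c' hc') c hc
    have hagree : ∀ c' ∈ F (n + 1), psum q (n + 1) c' = (e - q) c' := by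
      intro c' hc'
      have hsplit : psum q (n + 1)
          = (∑ m ∈ Finset.range 2, ((-1 : k) ^ m) • qpow q m)
            + ∑ m ∈ Finset.Ico 2 (n + 2), ((-1 : k) ^ m) • qpow q m :=
        (Finset.sum_range_add_sum_Ico _ (by omega : 2 ≤ n + 2)).symm
      rw [hsplit, LinearMap.add_apply]
      have htail : (∑ m ∈ Finset.Ico 2 (n + 2), ((-1 : k) ^ m) • qpow q m) c' = 0 := by
        rw [LinearMap.sum_apply]
        apply Finset.sum_eq_zero
        intro m hm
        have h2 : 2 ≤ m := (Finset.mem_Ico.mp hm).1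
        obtain ⟨j, rfl⟩ : ∃ j, m = j + 1 := ⟨m - 1, by omega⟩
        have h0 : qpow q (j + 1) c' = 0 := hqpow j c' (hmono (by omega) hc')
        simp [h0]
      rw [htail, add_zero, Finset.sum_range_succ, Finset.sum_range_one]
      simp [hq0, hq1, sub_eq_add_neg]
    have h2 : conv gi (psum q (n + 1)) c = conv gi (e - q) c :=
      conv_congr F hsub (n + 1) gi gi (psum q (n + 1)) (e - q)
        (fun _ _ => rfl) hagree c hc
    rw [h1, h2, conv_sub_right, her gi]
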